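/- Let Q be a field with involution and let H₁, H₂, H₃ be finite-dimensional Q-vector spaces with nondegenerate skew-Hermitian forms ρ₁, ρ₂, ρ₃. Let N₁ ⊆ H₁ ⊕ H₂ and N₂ ⊆ H₂ ⊕ H₃ be Lagrangian subspaces with respect to (−ρ₁)⊕ρ₂ and (−ρ₂)⊕ρ₃ respectively. Then the relational composition N₂ ∘ N₁ = {(h₁,h₃) : ∃h₂ ∈ H₂, (h₁,h₂) ∈ N₁, (h₂,h₃) ∈ N₂} is a Lagrangian subspace of (H₁ ⊕ H₃, (−ρ₁)⊕ρ₃). -/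

import Mathlib

/-- A skew-Hermitian form on an `R`-module `H`, relative to an involution `σ` of `R`:
sesquilinear (linear in the first variable, conjugate-linear in the second),
skew-symmetric and non-degenerate. -/
structure SHForm (R : Type) [CommRing R] (σ : R →+* R)
    (H : Type) [AddCommGroup H] [Module R H] : Type where
  form : H → H → R
  add_left : ∀ x x' y, form (x + x') y = form x y + form x' y
  smul_left : ∀ (r : R) (x y : H), form (r • x) y = r * form x y
  add_right : ∀ x y y', form x (y + y') = form x y + form x y'
  smul_right : ∀ (r : R) (x y : H), form x (r • y) = σ r * form x y
  skew : ∀ x y, form x y = - σ (form y x)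
  nondeg : ∀ x, (∀ y, form x y = 0) → x = 0

namespace SHForm

variable {Q : Type} [Field Q] {σ : Q →+* Q}
variable {H : Type} [AddCommGroup H] [Module Q H]

theorem zero_left (ρ : SHForm Q σ H) (y : H) : ρ.form 0 y = 0 := by
  have h := ρ.add_left 0 0 y
  rw [add_zero] at h
  exact left_eq_add.mp h

theorem zero_right (ρ : SHForm Q σ H) (x : H) : ρ.form x 0 = 0 := by
  have h := ρ.add_right x 0 0
  rw [add_zero] at h
  exact left_eq_add.mp h

theorem neg_left (ρ : SHForm Q σ H) (x y : H) : ρ.form (-x) y = - ρ.form x y := by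
  have := ρ.smul_left (-1) x y
  simpa using this

theorem sub_left (ρ : SHForm Q σ H) (x x' y : H) :
    ρ.form (x - x') y = ρ.form x y - ρ.form x' y := by
  rw [sub_eq_add_neg, ρ.add_left, ρ.neg_left, sub_eq_add_neg]

theorem refl (hσ : ∀ q, σ (σ q) = q) (ρ : SHForm Q σ H) {x y : H}
    (h : ρ.form x y = 0) : ρ.form y x = 0 := by
  have := ρ.skew y x
  rw [h] at this
  simpa using this

/-- The annihilator of a submodule with respect to a skew-Hermitian form. -/
def annih (ρ : SHForm Q σ H) (W : Submodule Q H) : Submodule Q H where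
  carrier := {x | ∀ w ∈ W, ρ.form x w = 0}
  add_mem' := by
    intro a b ha hb w hw
    rw [ρ.add_left, ha w hw, hb w hw, add_zero]
  zero_mem' := fun w _ => ρ.zero_left w
  smul_mem' := by
    intro r a ha w hw
    rw [ρ.smul_left, ha w hw, mul_zero]

theorem mem_annih (ρ : SHForm Q σ H) (W : Submodule Q H) (x : H) :
    x ∈ ρ.annih W ↔ ∀ w ∈ W, ρ.form x w = 0 := Iff.rfl

variable [FiniteDimensional Q H]

/-- The semilinear map to the dual induced by the form. -/
def toDual (ρ : SHForm Q σ H) : H →ₛₗ[σ] Module.Dual Q H where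
  toFun x :=
    { toFun := fun v => ρ.form v x
      map_add' := fun a b => ρ.add_left a b x
      map_smul' := fun r a => ρ.smul_left r a x }
  map_add' x y := by ext v; exact ρ.add_right v x y
  map_smul' r x := by ext v; exact ρ.smul_right r v x

theorem toDual_apply (ρ : SHForm Q σ H) (x v : H) : ρ.toDual x v = ρ.form v x := rfl

theorem toDual_injective (hσ : ∀ q, σ (σ q) = q) (ρ : SHForm Q σ H) :
    Function.Injective ρ.toDual := by
  intro x y hxy
  rw [← sub_eq_zero]
  apply ρ.nondeg
  intro v
  apply ρ.refl hσ
  have : ρ.form v x = ρ.form v y := by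
    have := congrArg (fun φ => φ v) hxy
    simpa [toDual_apply] using this
  calc ρ.form v (x - y) = ρ.form v (x + (-1 : Q) • y) := by rw [neg_one_smul, sub_eq_add_neg]
    _ = ρ.form v x + σ (-1) * ρ.form v y := by rw [ρ.add_right, ρ.smul_right]
    _ = 0 := by simp [this]

theorem toDual_surjective (hσ : ∀ q, σ (σ q) = q) (ρ : SHForm Q σ H) :
    Function.Surjective ρ.toDual := by
  have hσinj : Function.Injective σ := Function.LeftInverse.injective hσ
  set n := Module.finrank Q H
  let b := Module.finBasis Q H
  have hli : LinearIndependent Q (fun i => ρ.toDual (b i)) := by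
    rw [Fintype.linearIndependent_iff]
    intro g hg i
    have hx : (∑ j, σ (g j) • b j) = 0 := by
      apply ρ.toDual_injective hσ
      rw [map_sum, map_zero]
      calc ∑ j, ρ.toDual (σ (g j) • b j) = ∑ j, g j • ρ.toDual (b j) := by
            refine Finset.sum_congr rfl fun j _ => ?_
            rw [map_smulₛₗ, hσ]
        _ = 0 := hg
    have := Fintype.linearIndependent_iff.mp b.linearIndependent (fun j => σ (g j)) hx i
    have h2 := congrArg σ this
    rwa [hσ, map_zero] at h2
  have hspan : Submodule.span Q (Set.range fun i => ρ.toDual (b i)) = ⊤ := by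
    apply Submodule.eq_top_of_finrank_eq
    rw [finrank_span_eq_card hli, Subspace.dual_finrank_eq]
    rw [Fintype.card_fin]
  intro φ
  have hφ : φ ∈ Submodule.span Q (Set.range fun i => ρ.toDual (b i)) := by
    rw [hspan]; trivial
  obtain ⟨c, hc⟩ := (Finsupp.mem_span_range_iff_exists_finsupp).mp hφ
  refine ⟨∑ i, σ (c i) • b i, ?_⟩
  rw [map_sum]
  rw [← hc, Finsupp.sum_fintype]
  · congr 1
    ext i
    rw [map_smulₛₗ, hσ]
  · intro i; exact zero_smul Q _

theorem finrank_annih (hσ : ∀ q, σ (σ q) = q) (ρ : SHForm Q σ H) (W : Submodule Q H) :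
    Module.finrank Q (ρ.annih W) + Module.finrank Q W = Module.finrank Q H := by
  classical
  -- additive hom from annih W to the dual annihilator
  let f : ρ.annih W →+ W.dualAnnihilator :=
    { toFun := fun x => ⟨ρ.toDual x.1, by
        rw [Submodule.mem_dualAnnihilator]
        intro w hw
        exact ρ.refl hσ (x.2 w hw)⟩
      map_zero' := by ext v; simp
      map_add' := by intro a b; ext v; simp }
  have hfbij : Function.Bijective f := by
    constructor
    · intro a b hab
      have : ρ.toDual a.1 = ρ.toDual b.1 := congrArg Subtype.val hab
      exact Subtype.ext (ρ.toDual_injective hσ this)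
    · rintro ⟨φ, hφ⟩
      obtain ⟨x, hx⟩ := ρ.toDual_surjective hσ φ
      rw [Submodule.mem_dualAnnihilator] at hφ
      refine ⟨⟨x, ?_⟩, Subtype.ext hx⟩
      intro w hw
      apply ρ.refl hσ
      have : ρ.toDual x w = 0 := by rw [hx]; exact hφ w hw
      exact this
  have hrank : Module.rank Q (ρ.annih W) = Module.rank Q W.dualAnnihilator := by
    refine rank_eq_of_equiv_equiv (⟨σ, map_zero σ⟩ : ZeroHom Q Q)
      (AddEquiv.ofBijective f hfbij)
      ⟨Function.LeftInverse.injective hσ, Function.RightInverse.surjective hσ⟩ ?_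
    intro r m
    ext v
    show ρ.toDual (r • m.1) v = (σ r • ρ.toDual m.1) v
    rw [map_smulₛₗ]
  have hfr : Module.finrank Q (ρ.annih W) = Module.finrank Q W.dualAnnihilator := by
    simp only [Module.finrank, hrank]
  rw [hfr, ← LinearEquiv.finrank_eq (Subspace.quotEquivAnnihilator W),
    Submodule.finrank_quotient_add_finrank]

theorem le_annih_annih (hσ : ∀ q, σ (σ q) = q) (ρ : SHForm Q σ H) (W : Submodule Q H) :
    W ≤ ρ.annih (ρ.annih W) := by
  intro x hx a ha
  exact ρ.refl hσ (ha x hx)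

theorem annih_annih (hσ : ∀ q, σ (σ q) = q) (ρ : SHForm Q σ H) (W : Submodule Q H) :
    ρ.annih (ρ.annih W) = W := by
  refine (Submodule.eq_of_le_of_finrank_le (ρ.le_annih_annih hσ W) ?_).symm
  have h1 := ρ.finrank_annih hσ W
  have h2 := ρ.finrank_annih hσ (ρ.annih W)
  omega

theorem annih_sup (ρ : SHForm Q σ H) (U W : Submodule Q H) :
    ρ.annih (U ⊔ W) = ρ.annih U ⊓ ρ.annih W := by
  apply le_antisymm
  · intro x hx
    exact ⟨fun w hw => hx w (Submodule.mem_sup_left hw),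
      fun w hw => hx w (Submodule.mem_sup_right hw)⟩
  · rintro x ⟨hU, hW⟩ w hw
    obtain ⟨u, hu, v, hv, rfl⟩ := Submodule.mem_sup.mp hw
    rw [ρ.add_right, hU u hu, hW v hv, add_zero]

theorem annih_inf (hσ : ∀ q, σ (σ q) = q) (ρ : SHForm Q σ H) (U W : Submodule Q H) :
    ρ.annih (U ⊓ W) = ρ.annih U ⊔ ρ.annih W := by
  have : U ⊓ W = ρ.annih (ρ.annih U ⊔ ρ.annih W) := by
    rw [ρ.annih_sup, ρ.annih_annih hσ, ρ.annih_annih hσ]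
  rw [this, ρ.annih_annih hσ]

/-- Negation of a skew-Hermitian form. -/
def negF (ρ : SHForm Q σ H) : SHForm Q σ H where
  form x y := -(ρ.form x y)
  add_left x x' y := by beta_reduce; rw [ρ.add_left]; ring
  smul_left r x y := by beta_reduce; rw [ρ.smul_left]; ring
  add_right x y y' := by beta_reduce; rw [ρ.add_right]; ring
  smul_right r x y := by beta_reduce; rw [ρ.smul_right]; ring
  skew x y := by beta_reduce; rw [ρ.skew x y]; simp
  nondeg x h := ρ.nondeg x (fun y => by have := h y; simpa using this)

/-- Direct sum of two skew-Hermitian forms. -/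
def prodF {A B : Type} [AddCommGroup A] [Module Q A] [AddCommGroup B] [Module Q B]
    (ρa : SHForm Q σ A) (ρb : SHForm Q σ B) : SHForm Q σ (A × B) where
  form x y := ρa.form x.1 y.1 + ρb.form x.2 y.2
  add_left x x' y := by
    beta_reduce; rw [Prod.fst_add, Prod.snd_add, ρa.add_left, ρb.add_left]; ring
  smul_left r x y := by
    beta_reduce; rw [Prod.smul_fst, Prod.smul_snd, ρa.smul_left, ρb.smul_left]; ring
  add_right x y y' := by
    beta_reduce; rw [Prod.fst_add, Prod.snd_add, ρa.add_right, ρb.add_right]; ring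
  smul_right r x y := by
    beta_reduce; rw [Prod.smul_fst, Prod.smul_snd, ρa.smul_right, ρb.smul_right]; ring
  skew x y := by beta_reduce; rw [ρa.skew x.1 y.1, ρb.skew x.2 y.2, map_add]; ring
  nondeg x h := by
    have h1 : x.1 = 0 := ρa.nondeg x.1 (fun c => by
      have := h (c, 0); simpa [ρb.zero_right] using this)
    have h2 : x.2 = 0 := ρb.nondeg x.2 (fun c => by
      have := h (0, c); simpa [ρa.zero_right] using this)
    exact Prod.ext h1 h2

end SHForm

/-- over a field, the relational composition of two Lagrangian relations
between finite-dimensional nondegenerate skew-Hermitian spaces is Lagrangian. -/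
theorem stmt18 (Q : Type) [Field Q] (σ : Q →+* Q) (hσ : ∀ q, σ (σ q) = q)
    (H₁ H₂ H₃ : Type)
    [AddCommGroup H₁] [Module Q H₁] [FiniteDimensional Q H₁]
    [AddCommGroup H₂] [Module Q H₂] [FiniteDimensional Q H₂]
    [AddCommGroup H₃] [Module Q H₃] [FiniteDimensional Q H₃]
    (ρ₁ : SHForm Q σ H₁) (ρ₂ : SHForm Q σ H₂) (ρ₃ : SHForm Q σ H₃)
    (N₁ : Submodule Q (H₁ × H₂)) (N₂ : Submodule Q (H₂ × H₃))
    (hN₁ : ∀ x : H₁ × H₂, x ∈ N₁ ↔ ∀ y ∈ N₁, - ρ₁.form x.1 y.1 + ρ₂.form x.2 y.2 = 0)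
    (hN₂ : ∀ x : H₂ × H₃, x ∈ N₂ ↔ ∀ y ∈ N₂, - ρ₂.form x.1 y.1 + ρ₃.form x.2 y.2 = 0) :
    ∀ x : H₁ × H₃,
      (∃ h₂ : H₂, (x.1, h₂) ∈ N₁ ∧ (h₂, x.2) ∈ N₂) ↔
      (∀ y : H₁ × H₃, (∃ h₂ : H₂, (y.1, h₂) ∈ N₁ ∧ (h₂, y.2) ∈ N₂) →
        - ρ₁.form x.1 y.1 + ρ₃.form x.2 y.2 = 0) := by
  classical
  set ω₁₂ := (ρ₁.negF).prodF ρ₂ with hω₁₂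
  set ω₂₃ := (ρ₂.negF).prodF ρ₃ with hω₂₃
  set Ω := ω₁₂.prodF ω₂₃ with hΩ
  have hω₁₂f : ∀ x y : H₁ × H₂, ω₁₂.form x y = - ρ₁.form x.1 y.1 + ρ₂.form x.2 y.2 :=
    fun x y => rfl
  have hω₂₃f : ∀ x y : H₂ × H₃, ω₂₃.form x y = - ρ₂.form x.1 y.1 + ρ₃.form x.2 y.2 :=
    fun x y => rfl
  have hΩf : ∀ x y : (H₁ × H₂) × (H₂ × H₃),
      Ω.form x y = ω₁₂.form x.1 y.1 + ω₂₃.form x.2 y.2 := fun x y => rfl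
  -- N₁, N₂ are Lagrangian
  have hN₁' : ω₁₂.annih N₁ = N₁ := by
    ext x
    rw [ω₁₂.mem_annih, hN₁ x]
    constructor <;> exact fun h y hy => by have := h y hy; rw [hω₁₂f] at *; assumption
  have hN₂' : ω₂₃.annih N₂ = N₂ := by
    ext x
    rw [ω₂₃.mem_annih, hN₂ x]
    constructor <;> exact fun h y hy => by have := h y hy; rw [hω₂₃f] at *; assumption
  -- the product Lagrangian
  set Λ := N₁.prod N₂ with hΛdef
  have hΛ : Ω.annih Λ = Λ := by
    apply le_antisymm
    · intro x hx
      constructor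
      · rw [← hN₁']
        intro y hy
        have := hx (y, 0) ⟨hy, N₂.zero_mem⟩
        rw [hΩf, ω₂₃.zero_right] at this
        simpa using this
      · rw [← hN₂']
        intro y hy
        have := hx (0, y) ⟨N₁.zero_mem, hy⟩
        rw [hΩf, ω₁₂.zero_right] at this
        simpa using this
    · rintro x ⟨hx1, hx2⟩ z ⟨hz1, hz2⟩
      rw [hΩf]
      have e1 : ω₁₂.form x.1 z.1 = 0 := by rw [← hN₁'] at hx1; exact hx1 z.1 hz1
      have e2 : ω₂₃.form x.2 z.2 = 0 := by rw [← hN₂'] at hx2; exact hx2 z.2 hz2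
      rw [e1, e2, add_zero]
  -- the coisotropic diagonal subspace
  let dmap : ((H₁ × H₂) × (H₂ × H₃)) →ₗ[Q] H₂ :=
    { toFun := fun z => z.1.2 - z.2.1
      map_add' := by intro a b; simp; abel
      map_smul' := by intro r a; simp [smul_sub] }
  set K := LinearMap.ker dmap with hKdef
  have memK : ∀ z : (H₁ × H₂) × (H₂ × H₃), z ∈ K ↔ z.1.2 = z.2.1 := by
    intro z
    rw [LinearMap.mem_ker]
    show z.1.2 - z.2.1 = 0 ↔ _
    rw [sub_eq_zero]
  let g : H₂ →ₗ[Q] ((H₁ × H₂) × (H₂ × H₃)) :=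
    { toFun := fun a => ((0, a), (a, 0))
      map_add' := by intro a b; simp
      map_smul' := by intro r a; simp }
  have hK' : Ω.annih K = LinearMap.range g := by
    apply le_antisymm
    · intro x hx
      have h1 : x.1.1 = 0 := by
        apply ρ₁.nondeg
        intro h
        have := hx ((h, 0), (0, 0)) (by rw [memK])
        rw [hΩf, hω₁₂f, hω₂₃f] at this
        simp only [ρ₂.zero_right, ρ₃.zero_right] at this
        linear_combination -this
      have h4 : x.2.2 = 0 := by
        apply ρ₃.nondeg
        intro h
        have := hx ((0, 0), (0, h)) (by rw [memK])
        rw [hΩf, hω₁₂f, hω₂₃f] at this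
        simp only [ρ₁.zero_right, ρ₂.zero_right] at this
        linear_combination this
      have h23 : x.1.2 = x.2.1 := by
        rw [← sub_eq_zero]
        apply ρ₂.nondeg
        intro b
        rw [ρ₂.sub_left]
        have := hx ((0, b), (b, 0)) (by rw [memK])
        rw [hΩf, hω₁₂f, hω₂₃f] at this
        simp only [ρ₁.zero_right, ρ₃.zero_right] at this
        linear_combination this
      refine ⟨x.1.2, ?_⟩
      show ((0, x.1.2), (x.1.2, 0)) = x
      have hx1 : ((0 : H₁), x.1.2) = x.1 := Prod.ext h1.symm rfl
      have hx2 : (x.1.2, (0 : H₃)) = x.2 := Prod.ext h23 h4.symm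
      rw [hx1, hx2]
    · rintro x ⟨a, rfl⟩ z hz
      rw [memK] at hz
      show Ω.form ((0, a), (a, 0)) z = 0
      rw [hΩf, hω₁₂f, hω₂₃f]
      simp only [ρ₁.zero_left, ρ₃.zero_left]
      rw [hz]
      ring
  intro x
  constructor
  · rintro ⟨h₂, hm1, hm2⟩ y ⟨k₂, hk1, hk2⟩
    have e1 := (hN₁ _).mp hm1 _ hk1
    have e2 := (hN₂ _).mp hm2 _ hk2
    simp only at e1 e2
    linear_combination e1 + e2
  · intro hx
    set xt : (H₁ × H₂) × (H₂ × H₃) := ((x.1, 0), (0, x.2)) with hxt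
    have hmem : xt ∈ Ω.annih (Λ ⊓ K) := by
      intro z hz
      rw [Submodule.mem_inf] at hz
      obtain ⟨hzΛ, hzK⟩ := hz
      rw [memK] at hzK
      obtain ⟨hz1, hz2⟩ := (Submodule.mem_prod).mp hzΛ
      rw [hΩf, hω₁₂f, hω₂₃f]
      simp only [hxt, ρ₂.zero_left]
      have := hx (z.1.1, z.2.2) ⟨z.1.2, hz1, by show (z.1.2, z.2.2) ∈ N₂; rw [hzK]; exact hz2⟩
      simp only at this
      linear_combination this
    rw [Ω.annih_inf hσ, hΛ, hK'] at hmem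
    obtain ⟨u, hu, v, hv, huv⟩ := Submodule.mem_sup.mp hmem
    obtain ⟨a, rfl⟩ := hv
    have hu' : u = xt - g a := by rw [← huv]; abel
    refine ⟨-a, ?_, ?_⟩
    · have := hu.1
      rw [hu'] at this
      convert this using 1
      suffices h : ((x.1, -a) : H₁ × H₂) = (xt - g a).1 by
        exact iff_of_eq (congrArg (· ∈ (N₁ : Set (H₁ × H₂))) h)
      ext <;> simp [hxt, g]
    · have := hu.2
      rw [hu'] at this
      convert this using 1
      suffices h : ((-a, x.2) : H₂ × H₃) = (xt - g a).2 by
        exact iff_of_eq (congrArg (· ∈ (N₂ : Set (H₂ × H₃))) h)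
      ext <;> simp [hxt, g]
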